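/- The following two conditions are equivalent: (i) for every gear j ∈ {1,…,6} and every v ∈ Ω(j) there exist u₁ ∈ [T_min, T_max] and u₂ ∈ [F_b,min, F_b,max] with u₁·z(j)·z_f/r − C·v² − u₂ − G = 0; (ii) for every gear j ∈ {1,…,6} and for each of the two values v ∈ {π·ω_min·r/(30·z(j)·z_f), π·ω_max·r/(30·z(j)·z_f)} (the endpoints of Ω(j)), there exist u₁ ∈ [T_min, T_max] and u₂ ∈ [F_b,min, F_b,max] with u₁·z(j)·z_f/r − C·v² − u₂ − G = 0. In particular, verifying condition (i) requires checking only 6 × 2 conditions. -/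

import Mathlib

lemma solv_iff (A a Tmin Tmax Fbmin Fbmax : ℝ) (hA : 0 < A)
    (hT : Tmin ≤ Tmax) (hFb : Fbmin ≤ Fbmax) :
    (∃ u1 u2 : ℝ, Tmin ≤ u1 ∧ u1 ≤ Tmax ∧ Fbmin ≤ u2 ∧ u2 ≤ Fbmax ∧
      u1 * A - a - u2 = 0) ↔ (Tmin * A - Fbmax ≤ a ∧ a ≤ Tmax * A - Fbmin) := by
  constructor
  · rintro ⟨u1, u2, h1, h2, h3, h4, h5⟩
    constructor <;> nlinarith [mul_le_mul_of_nonneg_right h1 hA.le,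
      mul_le_mul_of_nonneg_right h2 hA.le]
  · rintro ⟨hL, hU⟩
    refine ⟨(max (Tmin * A - a) Fbmin + a) / A, max (Tmin * A - a) Fbmin, ?_, ?_, ?_, ?_, ?_⟩
    · rw [le_div_iff₀ hA]
      have := le_max_left (Tmin * A - a) Fbmin
      linarith
    · rw [div_le_iff₀ hA]
      have h1 : Tmin * A - a ≤ Tmax * A - a := by nlinarith
      have h2 : Fbmin ≤ Tmax * A - a := by linarith
      have := max_le h1 h2
      linarith
    · exact le_max_right _ _
    · apply max_le <;> linarith
    · field_simp
      ring

/-- Vehicle parameters. -/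
structure VehicleParams where
  C : ℝ        -- wind drag coefficient
  G : ℝ        -- constant road friction force
  r : ℝ        -- wheel radius
  zf : ℝ       -- final drive ratio
  z : ℤ → ℝ    -- gear ratios (used on gears 1,…,6)
  ωmin : ℝ     -- engine speed lower bound
  ωmax : ℝ     -- engine speed upper bound
  Tmin : ℝ     -- torque lower bound
  Tmax : ℝ     -- torque upper bound
  Fbmin : ℝ    -- brake force lower bound
  Fbmax : ℝ    -- brake force upper bound

/-- Engine speed ω(v, j) = 30·v·z(j)·z_f/(r·π). -/
noncomputable def engSpeed (P : VehicleParams) (v : ℝ) (j : ℤ) : ℝ :=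
  30 * v * P.z j * P.zf / (P.r * Real.pi)

/-- Feasible gear set Φ(v) = {j ∈ {1,…,6} : ω_min ≤ ω(v, j) ≤ ω_max}. -/
noncomputable def Phi (P : VehicleParams) (v : ℝ) : Set ℤ :=
  {j | 1 ≤ j ∧ j ≤ 6 ∧ P.ωmin ≤ engSpeed P v j ∧ engSpeed P v j ≤ P.ωmax}

/-- Ω(j) = {v ∈ ℝ : j ∈ Φ(v)}. -/
noncomputable def OmegaSet (P : VehicleParams) (j : ℤ) : Set ℝ := {v | j ∈ Phi P v}

/-- The force-balance assumption holds for all `j ∈ {1,…,6}` and all `v ∈ Ω(j)` if and only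
if it holds for the two endpoints `v = π·ω_min·r/(30·z(j)·z_f)` and
`v = π·ω_max·r/(30·z(j)·z_f)` of `Ω(j)`, for each `j ∈ {1,…,6}`: verifying the assumption
requires checking only 6 × 2 conditions. -/
theorem force_balance_endpoints_iff
    (P : VehicleParams)
    (hC : 0 < P.C) (hr : 0 < P.r) (hzf : 0 < P.zf)
    (hz6 : 0 < P.z 6) (hzmono : ∀ j : ℤ, 1 ≤ j → j ≤ 5 → P.z (j + 1) ≤ P.z j)
    (hωmin : 0 < P.ωmin) (hωle : P.ωmin ≤ P.ωmax)
    (hT : P.Tmin ≤ P.Tmax) (hFb : P.Fbmin ≤ P.Fbmax) :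
    (∀ j : ℤ, 1 ≤ j → j ≤ 6 → ∀ v : ℝ, v ∈ OmegaSet P j →
      ∃ u1 u2 : ℝ, P.Tmin ≤ u1 ∧ u1 ≤ P.Tmax ∧ P.Fbmin ≤ u2 ∧ u2 ≤ P.Fbmax ∧
        u1 * P.z j * P.zf / P.r - P.C * v ^ 2 - u2 - P.G = 0) ↔
    (∀ j : ℤ, 1 ≤ j → j ≤ 6 →
      ∀ v ∈ ({Real.pi * P.ωmin * P.r / (30 * P.z j * P.zf),
              Real.pi * P.ωmax * P.r / (30 * P.z j * P.zf)} : Set ℝ),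
      ∃ u1 u2 : ℝ, P.Tmin ≤ u1 ∧ u1 ≤ P.Tmax ∧ P.Fbmin ≤ u2 ∧ u2 ≤ P.Fbmax ∧
        u1 * P.z j * P.zf / P.r - P.C * v ^ 2 - u2 - P.G = 0) := by
  have hpi := Real.pi_pos
  -- positivity of each gear ratio
  have hzpos : ∀ j : ℤ, 1 ≤ j → j ≤ 6 → 0 < P.z j := by
    have h5 := hzmono 5 (by norm_num) (by norm_num)
    have h4 := hzmono 4 (by norm_num) (by norm_num)
    have h3 := hzmono 3 (by norm_num) (by norm_num)
    have h2 := hzmono 2 (by norm_num) (by norm_num)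
    have h1 := hzmono 1 (by norm_num) (by norm_num)
    norm_num at h5 h4 h3 h2 h1
    intro j hj1 hj6
    interval_cases j <;> linarith
  -- the key rewriting of the equation and endpoints membership
  constructor
  · -- forward: endpoints lie in Ω(j)
    intro h j hj1 hj6 v hv
    have hzj := hzpos j hj1 hj6
    apply h j hj1 hj6 v
    have hne : (30 : ℝ) * P.z j * P.zf ≠ 0 := by positivity
    rcases hv with hv | hv
    · have heq : engSpeed P v j = P.ωmin := by
        subst hv; unfold engSpeed; field_simp
      exact ⟨hj1, hj6, by rw [heq], by rw [heq]; exact hωle⟩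
    · simp only [Set.mem_singleton_iff] at hv
      have heq : engSpeed P v j = P.ωmax := by
        subst hv; unfold engSpeed; field_simp
      exact ⟨hj1, hj6, by rw [heq]; exact hωle, by rw [heq]⟩
  · -- backward
    intro h j hj1 hj6 v hv
    have hzj := hzpos j hj1 hj6
    set A : ℝ := P.z j * P.zf / P.r with hA
    have hApos : 0 < A := by positivity
    set vlo : ℝ := Real.pi * P.ωmin * P.r / (30 * P.z j * P.zf) with hvlo
    set vhi : ℝ := Real.pi * P.ωmax * P.r / (30 * P.z j * P.zf) with hvhi
    have hvlopos : 0 < vlo := by rw [hvlo]; positivity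
    -- bounds on v
    obtain ⟨-, -, hlo, hhi⟩ := hv
    have hden : 0 < 30 * P.z j * P.zf := by positivity
    have hvle : vlo ≤ v := by
      unfold engSpeed at hlo
      rw [hvlo, div_le_iff₀ hden]
      rw [le_div_iff₀ (by positivity : 0 < P.r * Real.pi)] at hlo
      nlinarith
    have hvge : v ≤ vhi := by
      unfold engSpeed at hhi
      rw [hvhi, le_div_iff₀ hden]
      rw [div_le_iff₀ (by positivity : 0 < P.r * Real.pi)] at hhi
      nlinarith
    -- get endpoint conditions
    have hE1 := h j hj1 hj6 vlo (Or.inl rfl)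
    have hE2 := h j hj1 hj6 vhi (Or.inr rfl)
    -- rewrite each via solv_iff
    have key : ∀ w : ℝ,
        (∃ u1 u2 : ℝ, P.Tmin ≤ u1 ∧ u1 ≤ P.Tmax ∧ P.Fbmin ≤ u2 ∧ u2 ≤ P.Fbmax ∧
          u1 * P.z j * P.zf / P.r - P.C * w ^ 2 - u2 - P.G = 0) ↔
        (P.Tmin * A - P.Fbmax ≤ P.C * w ^ 2 + P.G ∧
         P.C * w ^ 2 + P.G ≤ P.Tmax * A - P.Fbmin) := by
      intro w
      rw [← solv_iff A (P.C * w ^ 2 + P.G) P.Tmin P.Tmax P.Fbmin P.Fbmax hApos hT hFb]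
      constructor <;> rintro ⟨u1, u2, a1, a2, a3, a4, a5⟩ <;>
        refine ⟨u1, u2, a1, a2, a3, a4, ?_⟩ <;>
        · rw [hA] at *
          field_simp at a5 ⊢
          linarith
    rw [key] at hE1 hE2 ⊢
    have hsq1 : vlo ^ 2 ≤ v ^ 2 := by nlinarith
    have hsq2 : v ^ 2 ≤ vhi ^ 2 := by nlinarith
    have hm1 : P.C * vlo ^ 2 ≤ P.C * v ^ 2 := by
      exact mul_le_mul_of_nonneg_left hsq1 hC.le
    have hm2 : P.C * v ^ 2 ≤ P.C * vhi ^ 2 := by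
      exact mul_le_mul_of_nonneg_left hsq2 hC.le
    exact ⟨le_trans hE1.1 (by linarith), le_trans (by linarith) hE2.2⟩
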